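/- If f : ℕ → ℕ is an infinite branch of the reduced game tree T (every initial segment of f lies in T), then f is a draw in G_{S₁,S₂}, i.e., f ∉ U(S₁) and f ∉ U(S₂). -/
import Mathlib


/-- The initial segment `[f 0, ..., f (n-1)]` of an infinite sequence. -/
def initSeg (f : ℕ → ℕ) (n : ℕ) : List ℕ := (List.range n).map f

/-- The set of infinite sequences having some initial segment in `S`. -/
def U (S : Set (List ℕ)) : Set (ℕ → ℕ) := { f | ∃ n, initSeg f n ∈ S }

/-- A node `v` is losing for player one if it is player one's turn (even length) and some
initial segment of `v` lies in `S₂`; losing for player two if it is player two's turn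
(odd length) and some initial segment of `v` lies in `S₁`. -/
def LosingNode (S₁ S₂ : Set (List ℕ)) (v : List ℕ) : Prop :=
  (Even v.length ∧ ∃ k ≤ v.length, v.take k ∈ S₂) ∨
    (Odd v.length ∧ ∃ k ≤ v.length, v.take k ∈ S₁)

/-- The reduced game tree: all finite sequences with no proper initial segment that is a
losing node for either player. -/
def ReducedTree (S₁ S₂ : Set (List ℕ)) : Set (List ℕ) :=
  { v | ∀ u : List ℕ, u <+: v → u ≠ v → ¬ LosingNode S₁ S₂ u }

/-- An infinite branch of the reduced game tree is a draw of the game. -/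
theorem infinite_branch_draw (S₁ S₂ : Set (List ℕ)) (hdisj : U S₁ ∩ U S₂ = ∅)
    (f : ℕ → ℕ) (hbranch : ∀ n : ℕ, initSeg f n ∈ ReducedTree S₁ S₂) :
    f ∉ U S₁ ∧ f ∉ U S₂ := by
  have hlen : ∀ n, (initSeg f n).length = n := by
    intro n; simp [initSeg]
  have htake : ∀ {k n : ℕ}, k ≤ n → (initSeg f n).take k = initSeg f k := by
    intro k n h
    simp [initSeg, ← List.map_take, List.take_range, Nat.min_eq_left h]
  have key : ∀ (n L : ℕ), n ≤ L → ¬ LosingNode S₁ S₂ (initSeg f L) := by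
    intro n L _ hl
    have := hbranch (L+1) (initSeg f L) ⟨[f L], by
      have : initSeg f (L+1) = initSeg f L ++ [f L] := by
        simp [initSeg, List.range_succ]
      rw [this]⟩ (by
        intro h
        have := congrArg List.length h
        simp [hlen] at this)
    exact this hl
  constructor
  · rintro ⟨n, hn⟩
    rcases Nat.even_or_odd n with he | ho
    · exact key n (n+1) (Nat.le_succ n)
        (Or.inr ⟨by simp [hlen]; exact Even.add_one he,
          n, by simp [hlen], by rw [htake (Nat.le_succ n)]; exact hn⟩)
    · exact key n n le_rfl
        (Or.inr ⟨by simp [hlen, ho], n, by simp [hlen], by rw [htake le_rfl]; exact hn⟩)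
  · rintro ⟨n, hn⟩
    rcases Nat.even_or_odd n with he | ho
    · exact key n n le_rfl
        (Or.inl ⟨by simp [hlen, he], n, by simp [hlen], by rw [htake le_rfl]; exact hn⟩)
    · exact key n (n+1) (Nat.le_succ n)
        (Or.inl ⟨by simp [hlen]; exact Odd.add_one ho,
          n, by simp [hlen], by rw [htake (Nat.le_succ n)]; exact hn⟩)
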